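/- For all n ≥ 1, the sum of the periodicity function of the Thue–Morse word over the odd indices below n satisfies (3/8)(n−1)² ≤ Σ_{0 ≤ i < n, i odd} p_t(i) ≤ (3/4)n². -/

import Mathlib

open Finset Filter Asymptotics

/-- `n` is a local period of the infinite word `w` at position `i`:
`n ≥ 1` and either (`n ≤ i` and `w_{i+k} = w_{i-n+k}` for all `k < n`)
or (`n > i` and `w_k = w_{n+k}` for all `k < i`). -/
def IsLocalPeriodAt {α : Type*} (w : ℕ → α) (i n : ℕ) : Prop :=
  1 ≤ n ∧ ((n ≤ i ∧ ∀ k < n, w (i + k) = w (i - n + k)) ∨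
           (i < n ∧ ∀ k < i, w k = w (n + k)))

/-- The periodicity function `p_w(i)`: the least local period of `w` at `i`. -/
noncomputable def perFn {α : Type*} (w : ℕ → α) (i : ℕ) : ℕ :=
  sInf {n | IsLocalPeriodAt w i n}

/-- The summatory function `P_w(n) = ∑_{j<n} p_w(j)`. -/
noncomputable def sumFn {α : Type*} (w : ℕ → α) (n : ℕ) : ℕ :=
  ∑ j ∈ Finset.range n, perFn w j

/-- The periodic complexity `h_w(n) = P_w(n)/n`. -/
noncomputable def perComplexity {α : Type*} (w : ℕ → α) (n : ℕ) : ℝ :=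
  (sumFn w n : ℝ) / n

/-- The Thue–Morse word: `t_i = 0` iff the number of 1's in the binary
representation of `i` is even. -/
def tm (i : ℕ) : ℕ :=
  if Even ((Nat.digits 2 i).count 1) then 0 else 1

lemma tm01 (i : ℕ) : tm i = 0 ∨ tm i = 1 := by
  unfold tm; split; exacts [Or.inl rfl, Or.inr rfl]

lemma tm_two_mul (m : ℕ) : tm (2 * m) = tm m := by
  rcases Nat.eq_zero_or_pos m with h | h
  · simp [h]
  unfold tm
  rw [Nat.digits_def' (le_refl 2) (by omega : 0 < 2 * m)]
  have h1 : 2 * m % 2 = 0 := by omega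
  have h2 : 2 * m / 2 = m := by omega
  rw [h1, h2]
  simp

lemma tm_two_mul_add_one (m : ℕ) : tm (2 * m + 1) = 1 - tm m := by
  unfold tm
  rw [Nat.digits_def' (le_refl 2) (by omega : 0 < 2 * m + 1)]
  have h1 : (2 * m + 1) % 2 = 1 := by omega
  have h2 : (2 * m + 1) / 2 = m := by omega
  rw [h1, h2]
  rcases Nat.even_or_odd ((Nat.digits 2 m).count 1) with he | ho
  · simp [he, Nat.even_add_one]
  · have : ¬ Even ((Nat.digits 2 m).count 1) := Nat.not_even_iff_odd.mpr ho
    simp [this, Nat.even_add_one]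

lemma tm_zero : tm 0 = 0 := by simp [tm]
lemma tm_one : tm 1 = 1 := by
  have := tm_two_mul_add_one 0; simpa [tm_zero] using this
lemma tm_two : tm 2 = 1 := by
  have := tm_two_mul 1; rw [show (2:ℕ) = 2*1 by ring, this, tm_one]
lemma tm_three : tm 3 = 0 := by
  have := tm_two_mul_add_one 1; rw [show (3:ℕ) = 2*1+1 by ring, this, tm_one]
lemma tm_four : tm 4 = 1 := by
  have := tm_two_mul 2; rw [show (4:ℕ) = 2*2 by ring, this, tm_two]

/-- No square in the Thue–Morse word is centered at an odd position. -/
lemma no_odd_center : ∀ i, Odd i → ∀ n, 1 ≤ n → n ≤ i →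
    ¬ (∀ k < n, tm (i + k) = tm (i - n + k)) := by
  intro i
  induction i using Nat.strong_induction_on with
  | _ i IH =>
  intro hi n hn1 hni H
  obtain ⟨m, rfl⟩ := hi
  rcases Nat.even_or_odd n with hne | hno
  · -- n even : descend
    obtain ⟨r0, hr0⟩ := hne
    obtain ⟨n', rfl⟩ : ∃ n', n = 2 * n' := ⟨r0, by omega⟩
    have hn'1 : 1 ≤ n' := by omega
    have hn'm : n' ≤ m := by omega
    have F1 : ∀ s < n', tm (m + s) = tm (m - n' + s) := by
      intro s hs
      have h := H (2*s) (by omega)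
      rw [show 2*m+1 - 2*n' = 2*(m-n')+1 from by omega] at h
      rw [show 2*m+1+2*s = 2*(m+s)+1 from by ring,
          show 2*(m-n')+1+2*s = 2*(m-n'+s)+1 from by ring,
          tm_two_mul_add_one, tm_two_mul_add_one] at h
      have := tm01 (m+s); have := tm01 (m-n'+s); omega
    have F2 : ∀ s < n', tm (m + 1 + s) = tm (m + 1 - n' + s) := by
      intro s hs
      have h := H (2*s+1) (by omega)
      rw [show 2*m+1 - 2*n' = 2*(m-n')+1 from by omega] at h
      rw [show 2*m+1+(2*s+1) = 2*(m+1+s) from by ring,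
          show 2*(m-n')+1+(2*s+1) = 2*(m-n'+s+1) from by omega,
          tm_two_mul, tm_two_mul] at h
      rw [show m+1-n'+s = m-n'+s+1 from by omega]
      exact h
    rcases Nat.even_or_odd m with hme | hmo
    · have hm1 : Odd (m+1) := by
        rcases hme with ⟨t, ht⟩; exact ⟨t, by omega⟩
      exact IH (m+1) (by omega) hm1 n' hn'1 (by omega) F2
    · exact IH m (by omega) hmo n' hn'1 hn'm F1
  · -- n odd : direct contradiction
    obtain ⟨q, rfl⟩ := hno
    have hqm : q ≤ m := by omega
    have hsub : 2*m+1 - (2*q+1) = 2*(m-q) := by omega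
    set p := m - q with hp
    have E1 : ∀ s ≤ q, tm (p+s) + tm (p+q+s) = 1 := by
      intro s hs
      have h := H (2*s) (by omega)
      rw [hsub] at h
      rw [show 2*m+1+2*s = 2*(p+q+s)+1 from by omega,
          show 2*p+2*s = 2*(p+s) from by ring,
          tm_two_mul_add_one, tm_two_mul] at h
      have := tm01 (p+q+s); have := tm01 (p+s); omega
    have E2 : ∀ s < q, tm (p+s) + tm (p+q+s+1) = 1 := by
      intro s hs
      have h := H (2*s+1) (by omega)
      rw [hsub] at h
      rw [show 2*m+1+(2*s+1) = 2*(p+q+s+1) from by omega,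
          show 2*p+(2*s+1) = 2*(p+s)+1 from by ring,
          tm_two_mul, tm_two_mul_add_one] at h
      have := tm01 (p+q+s+1); have := tm01 (p+s); omega
    have chain : ∀ s, s ≤ q → tm (p+q+s) = tm (p+q) := by
      intro s
      induction s with
      | zero => simp
      | succ t iht =>
        intro hst
        have h1 := E1 t (by omega)
        have h2 := E2 t (by omega)
        have h3 := iht (by omega)
        rw [show p+q+(t+1) = p+q+t+1 from by ring]
        omega
    have hE := E1 q (le_refl q)
    have hc := chain q (le_refl q)
    rw [show p+q+q = p+2*q from by ring] at hc
    rw [show p+q+q = p+2*q from by ring] at hE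
    omega

/-- If the Thue–Morse prefix of length `2^k + 1` occurs at position `n ≥ 1`,
then `n ≥ 3·2^k`. -/
lemma tm_prefix_occ : ∀ k n, 1 ≤ n → (∀ r ≤ 2^k, tm r = tm (n + r)) → 3 * 2^k ≤ n := by
  intro k
  induction k with
  | zero =>
    intro n h1 H
    have h0 := H 0 (by norm_num)
    rw [Nat.add_zero, tm_zero] at h0
    by_contra hlt
    push_neg at hlt
    interval_cases n
    · rw [tm_one] at h0; omega
    · rw [tm_two] at h0; omega
  | succ k ih =>
    intro n hn1 H
    have h2pow : (2:ℕ) ≤ 2^(k+1) := by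
      calc (2:ℕ) = 2^1 := by norm_num
      _ ≤ 2^(k+1) := Nat.pow_le_pow_right (by norm_num) (by omega)
    have hne : ¬ Odd n := by
      rintro ⟨q, rfl⟩
      have h0 := H 0 (by omega)
      have h1 := H 1 (by omega)
      have h2 := H 2 (by omega)
      rw [Nat.add_zero, tm_zero, tm_two_mul_add_one] at h0
      rw [show 2*q+1+1 = 2*(q+1) from by ring, tm_one, tm_two_mul] at h1
      rw [show 2*q+1+2 = 2*(q+1)+1 from by ring, tm_two, tm_two_mul_add_one] at h2
      have := tm01 q; have := tm01 (q+1); omega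
    obtain ⟨r0, hr0⟩ := Nat.not_odd_iff_even.mp hne
    obtain ⟨n', rfl⟩ : ∃ n', n = 2 * n' := ⟨r0, by omega⟩
    have ih' : ∀ r ≤ 2^k, tm r = tm (n' + r) := by
      intro r hr
      have h := H (2*r) (by rw [pow_succ]; omega)
      rw [show 2*n' + 2*r = 2*(n'+r) from by ring, tm_two_mul, tm_two_mul] at h
      exact h
    have := ih n' (by omega) ih'
    rw [pow_succ]; omega

/-- `t` agrees with its shift by `3·2^k` on the first `2^(k+1)` letters. -/
lemma tm_shift : ∀ k r, r < 2^(k+1) → tm (3 * 2^k + r) = tm r := by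
  intro k
  induction k with
  | zero =>
    intro r hr
    interval_cases r
    · rw [show 3 * 2^0 + 0 = 3 from by norm_num, tm_three, tm_zero]
    · rw [show 3 * 2^0 + 1 = 4 from by norm_num, tm_four, tm_one]
  | succ k ih =>
    intro r hr
    rcases Nat.even_or_odd r with he | ho
    · obtain ⟨s0, hs0⟩ := he
      obtain ⟨s, rfl⟩ : ∃ s, r = 2 * s := ⟨s0, by omega⟩
      have hs : s < 2^(k+1) := by rw [pow_succ] at hr ⊢; omega
      rw [show 3 * 2^(k+1) + 2*s = 2*(3 * 2^k + s) from by rw [pow_succ]; ring,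
          tm_two_mul, tm_two_mul, ih s hs]
    · obtain ⟨s, rfl⟩ := ho
      have hs : s < 2^(k+1) := by rw [pow_succ] at hr ⊢; omega
      rw [show 3 * 2^(k+1) + (2*s+1) = 2*(3 * 2^k + s) + 1 from by rw [pow_succ]; ring,
          tm_two_mul_add_one, tm_two_mul_add_one, ih s hs]

lemma perFn_odd (i : ℕ) (hi : Odd i) : perFn tm i = 3 * 2^(Nat.log 2 i) := by
  have hi1 : 1 ≤ i := hi.pos
  set k := Nat.log 2 i with hk
  have hik : i < 2^(k+1) := Nat.lt_pow_succ_log_self (by norm_num) i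
  have hki : 2^k ≤ i := Nat.pow_log_le_self 2 (by omega)
  have hpow : 2^(k+1) = 2 * 2^k := by rw [pow_succ]; ring
  have hmem : IsLocalPeriodAt tm i (3 * 2^k) := by
    refine ⟨by have := pow_pos (by norm_num : (0:ℕ) < 2) k; omega, Or.inr ⟨by omega, ?_⟩⟩
    intro r hr
    exact (tm_shift k r (by omega)).symm
  have hlb : ∀ n, IsLocalPeriodAt tm i n → 3 * 2^k ≤ n := by
    rintro n ⟨hn1, ⟨hni, H⟩ | ⟨hin, H⟩⟩
    · exact absurd H (no_odd_center i hi n hn1 hni)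
    · rcases eq_or_lt_of_le hi1 with h1 | h1
      · -- i = 1
        have hk0 : k = 0 := by rw [hk, ← h1]; simp
        rw [hk0]
        by_contra hlt
        push_neg at hlt
        have hn2 : n = 2 := by omega
        have := H 0 (by omega)
        rw [hn2, Nat.add_zero, tm_zero, tm_two] at this
        omega
      · have hk1 : 1 ≤ k := by
          rw [hk]
          exact (Nat.le_log_iff_pow_le (by norm_num) (by omega)).mpr (by omega : 2^1 ≤ i)
        have h2ki : 2^k < i := by
          obtain ⟨c, hc⟩ : (2:ℕ) ∣ 2^k := dvd_pow_self 2 (by omega : k ≠ 0)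
          obtain ⟨m, hm⟩ := hi
          omega
        exact tm_prefix_occ k n (by omega) (fun r hr => H r (by omega))
  have hne : {n | IsLocalPeriodAt tm i n}.Nonempty := ⟨_, hmem⟩
  exact le_antisymm (Nat.sInf_le hmem) (hlb _ (Nat.sInf_mem hne))

lemma tm_sum_bound (n : ℕ) :
    3 * ((n/2)^2 + n/2) ≤ 2 * (∑ i ∈ (Finset.range n).filter (fun i => Odd i), perFn tm i) ∧
    (∑ i ∈ (Finset.range n).filter (fun i => Odd i), perFn tm i) ≤ 3 * (n/2)^2 := by
  induction n with
  | zero => simp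
  | succ n ih =>
    rw [Finset.range_add_one, Finset.filter_insert]
    by_cases hn : Odd n
    · rw [if_pos hn, Finset.sum_insert (by simp)]
      obtain ⟨q, rfl⟩ := hn
      have hp : perFn tm (2*q+1) = 3 * 2^(Nat.log 2 (2*q+1)) := perFn_odd _ ⟨q, rfl⟩
      set K := Nat.log 2 (2*q+1) with hK
      have hub : 2^K ≤ 2*q+1 := Nat.pow_log_le_self 2 (by omega)
      have hlb : 2*q+1 < 2^(K+1) := Nat.lt_pow_succ_log_self (by norm_num) _
      have hpow : 2^(K+1) = 2 * 2^K := by rw [pow_succ]; ring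
      have e1 : (2*q+1+1)/2 = q+1 := by omega
      have e2 : (2*q+1)/2 = q := by omega
      rw [e1, hp]
      obtain ⟨hA, hB⟩ := ih
      rw [e2] at hA hB
      have sq : (q+1)^2 = q^2 + 2*q + 1 := by ring
      omega
    · rw [if_neg hn]
      have he : (n+1)/2 = n/2 := by
        obtain ⟨m, rfl⟩ := Nat.not_odd_iff_even.mp hn
        omega
      rw [he]
      exact ih

theorem tm_perFn_odd_sum_bounds (n : ℕ) (hn : 1 ≤ n) :
    (3 / 8 : ℝ) * ((n : ℝ) - 1) ^ 2 ≤
        ((∑ i ∈ (Finset.range n).filter (fun i => Odd i), perFn tm i : ℕ) : ℝ) ∧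
      ((∑ i ∈ (Finset.range n).filter (fun i => Odd i), perFn tm i : ℕ) : ℝ) ≤
        (3 / 4 : ℝ) * (n : ℝ) ^ 2 := by
  obtain ⟨hA, hB⟩ := tm_sum_bound n
  set S := ∑ i ∈ (Finset.range n).filter (fun i => Odd i), perFn tm i with hS
  have hq1 : n - 1 ≤ 2 * (n/2) := by omega
  have hq2 : 2 * (n/2) ≤ n := by omega
  constructor
  · have key : 3 * (n-1)^2 ≤ 8 * S := by
      have h2 : (n-1)^2 ≤ (2*(n/2))^2 := Nat.pow_le_pow_left hq1 2
      have h3 : (2*(n/2))^2 = 4 * (n/2)^2 := by ring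
      omega
    have keyR : ((3 * (n-1)^2 : ℕ) : ℝ) ≤ ((8 * S : ℕ) : ℝ) := by exact_mod_cast key
    push_cast [Nat.cast_sub hn] at keyR
    nlinarith [keyR]
  · have key : 4 * S ≤ 3 * n^2 := by
      have h2 : (2*(n/2))^2 ≤ n^2 := Nat.pow_le_pow_left hq2 2
      have h3 : (2*(n/2))^2 = 4 * (n/2)^2 := by ring
      omega
    have keyR : ((4 * S : ℕ) : ℝ) ≤ ((3 * n^2 : ℕ) : ℝ) := by exact_mod_cast key
    push_cast at keyR
    nlinarith [keyR]
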